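/- The number of labelled (unrooted) trees on vertex set {1,...,n} is n^{n-2}. -/

import Mathlib

open Function Finset

set_option linter.unusedSectionVars false

namespace Cayley

variable {α : Type*} [Fintype α] [DecidableEq α]

lemma iter_enter {C : Finset α} {g h : α → α} (hgh : ∀ x ∉ C, g x = h x) :
    ∀ (N : ℕ) (x : α), h^[N] x ∈ C → ∃ k ≤ N, g^[k] x ∈ C := by
  intro N
  induction N with
  | zero => intro x hx; exact ⟨0, le_refl _, hx⟩
  | succ N ih =>
    intro x hx
    by_cases hxC : x ∈ C
    · exact ⟨0, Nat.zero_le _, hxC⟩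
    · rw [iterate_succ_apply] at hx
      obtain ⟨k, hk, hk2⟩ := ih (h x) hx
      refine ⟨k + 1, by omega, ?_⟩
      rw [iterate_succ_apply, hgh x hxC]
      exact hk2

lemma iter_stay {C : Finset α} {g : α → α} (hg : ∀ x ∈ C, g x ∈ C) {x : α} {k : ℕ}
    (hx : g^[k] x ∈ C) (j : ℕ) : g^[j + k] x ∈ C := by
  induction j with
  | zero => simpa using hx
  | succ j ih =>
    have : (j + 1) + k = 1 + (j + k) := by omega
    rw [this, iterate_add_apply]
    exact hg _ ih

lemma iter_fixed_of_le {g : α → α} {r x : α} (hr : g r = r) {i : ℕ} (hi : g^[i] x = r)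
    {k : ℕ} (hk : i ≤ k) : g^[k] x = r := by
  obtain ⟨j, rfl⟩ := Nat.exists_eq_add_of_le hk
  rw [Nat.add_comm, iterate_add_apply, hi, iterate_fixed hr]

lemma iter_periodic_repeat {g : α → α} {x : α} {i j : ℕ} (hij : i < j)
    (h : g^[i] x = g^[j] x) : ∀ m : ℕ, g^[i + m * (j - i)] x = g^[i] x := by
  intro m
  induction m with
  | zero => simp
  | succ m ih =>
    have h1 : i + (m + 1) * (j - i) = (j - i) + (i + m * (j - i)) := by
      set d := j - i with hd
      ring
    rw [h1, iterate_add_apply, ih, ← iterate_add_apply]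
    have h2 : j - i + i = j := Nat.sub_add_cancel hij.le
    rw [h2, ← h]

/-- Key lemma: if the orbit of `x` reaches a fixed point `r` of `f`,
it reaches it within `card α` steps. -/
lemma iter_card_eq_fixed {f : α → α} {r : α} (hr : f r = r) {x : α}
    (hx : ∃ k, f^[k] x = r) : f^[Fintype.card α] x = r := by
  classical
  set t := Nat.find hx with htdef
  have ht : f^[t] x = r := Nat.find_spec hx
  have key : ∀ i j : ℕ, i < j → j ≤ t → f^[i] x = f^[j] x → False := by
    intro i j hlt hle hij
    have hrep := iter_periodic_repeat hlt hij
    have hge : i + t * (j - i) ≥ t := by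
      have h1 : 1 ≤ j - i := by omega
      have := Nat.le_mul_of_pos_right t (by omega : 0 < j - i)
      omega
    have hir : f^[i] x = r := by
      rw [← hrep t]
      exact iter_fixed_of_le hr ht hge
    exact Nat.find_min hx (by omega : i < t) hir
  have hinj : Function.Injective (fun i : Fin (t + 1) => f^[(i : ℕ)] x) := by
    intro i j hij
    by_contra hne
    have hi := i.isLt
    have hj := j.isLt
    rcases Nat.lt_trichotomy (i : ℕ) (j : ℕ) with hlt | heq | hlt
    · exact key i j hlt (by omega) hij
    · exact hne (Fin.ext heq)
    · exact key j i hlt (by omega) hij.symm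
  have hcard : t + 1 ≤ Fintype.card α := by
    simpa using Fintype.card_le_of_injective _ hinj
  exact iter_fixed_of_le hr ht (by omega)

/-- Pigeonhole: an injective map on a finite type has every point periodic. -/
lemma exists_iterate_eq_self {f : α → α} (hf : Function.Injective f) (x : α) :
    ∃ k, 1 ≤ k ∧ k ≤ Fintype.card α ∧ f^[k] x = x := by
  have hni : ¬ Function.Injective (fun i : Fin (Fintype.card α + 1) => f^[(i : ℕ)] x) := by
    intro h
    have := Fintype.card_le_of_injective _ h
    simp at this
  rw [Function.not_injective_iff] at hni
  obtain ⟨i, j, hij, hne⟩ := hni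
  have hi := i.isLt
  have hj := j.isLt
  have key : ∀ a b : ℕ, a < b → b ≤ Fintype.card α → f^[a] x = f^[b] x →
      ∃ k, 1 ≤ k ∧ k ≤ Fintype.card α ∧ f^[k] x = x := by
    intro a b hlt hle hab
    refine ⟨b - a, by omega, by omega, ?_⟩
    have : f^[a] (f^[b - a] x) = f^[a] x := by
      rw [← iterate_add_apply, Nat.add_sub_cancel' hlt.le, hab]
    exact (hf.iterate a) this
  rcases Nat.lt_trichotomy (i : ℕ) (j : ℕ) with hlt | heq | hlt
  · exact key i j hlt (by omega) hij
  · exact absurd (Fin.ext heq) hne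
  · exact key j i hlt (by omega) hij.symm

end Cayley

namespace Cayley

variable {α : Type*} [Fintype α] [DecidableEq α]

/-- The set of periodic points of `g`. -/
def per (g : α → α) : Finset α :=
  univ.filter (fun x => ∃ k : Fin (Fintype.card α), g^[(k : ℕ) + 1] x = x)

lemma mem_per {g : α → α} {x : α} :
    x ∈ per g ↔ ∃ k, 1 ≤ k ∧ k ≤ Fintype.card α ∧ g^[k] x = x := by
  simp only [per, mem_filter, mem_univ, true_and]
  constructor
  · rintro ⟨k, hk⟩
    exact ⟨(k : ℕ) + 1, by omega, by have := k.isLt; omega, hk⟩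
  · rintro ⟨k, h1, h2, h3⟩
    exact ⟨⟨k - 1, by omega⟩, by simpa [Nat.sub_add_cancel h1] using h3⟩

lemma per_apply_mem {g : α → α} {x : α} (hx : x ∈ per g) : g x ∈ per g := by
  rw [mem_per] at hx ⊢
  obtain ⟨k, h1, h2, h3⟩ := hx
  refine ⟨k, h1, h2, ?_⟩
  rw [← iterate_succ_apply, iterate_succ_apply', h3]

lemma per_iterate_mem_of_mem {g : α → α} {x : α} (hx : x ∈ per g) (m : ℕ) :
    g^[m] x ∈ per g := by
  induction m with
  | zero => simpa using hx
  | succ m ih => rw [iterate_succ_apply']; exact per_apply_mem ih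

lemma per_surj {g : α → α} {x : α} (hx : x ∈ per g) : ∃ y ∈ per g, g y = x := by
  rw [mem_per] at hx
  obtain ⟨k, h1, h2, h3⟩ := hx
  refine ⟨g^[k - 1] x, per_iterate_mem_of_mem (mem_per.2 ⟨k, h1, h2, h3⟩) _, ?_⟩
  have h4 : g^[(k - 1) + 1] x = g (g^[k - 1] x) := iterate_succ_apply' _ _ _
  rw [← h4, Nat.sub_add_cancel h1, h3]

lemma iterate_card_mem_per (g : α → α) (x : α) : g^[Fintype.card α] x ∈ per g := by
  have hni : ¬ Function.Injective (fun i : Fin (Fintype.card α + 1) => g^[(i : ℕ)] x) := by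
    intro h
    have := Fintype.card_le_of_injective _ h
    simp at this
  rw [Function.not_injective_iff] at hni
  obtain ⟨i, j, hij, hne⟩ := hni
  have hi := i.isLt
  have hj := j.isLt
  have key : ∀ a b : ℕ, a < b → b ≤ Fintype.card α → g^[a] x = g^[b] x →
      g^[Fintype.card α] x ∈ per g := by
    intro a b hlt hle hab
    have hper : g^[a] x ∈ per g := by
      rw [mem_per]
      refine ⟨b - a, by omega, by omega, ?_⟩
      rw [← iterate_add_apply]
      have : b - a + a = b := by omega
      rw [this, ← hab]
    have : g^[Fintype.card α] x = g^[Fintype.card α - a] (g^[a] x) := by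
      rw [← iterate_add_apply]
      congr 1
      omega
    rw [this]
    exact per_iterate_mem_of_mem hper _
  rcases Nat.lt_trichotomy (i : ℕ) (j : ℕ) with hlt | heq | hlt
  · exact key i j hlt (by omega) hij
  · exact absurd (Fin.ext heq) hne
  · exact key j i hlt (by omega) hij.symm

/-- `g` restricted to its periodic points, as a permutation. -/
noncomputable def permOn (g : α → α) (C : Finset α) (hg : per g = C) : Equiv.Perm ↥C :=
  Equiv.ofBijective (fun x : ↥C => (⟨g x, by
      have := per_apply_mem (g := g) (x := (x : α)) (by rw [hg]; exact x.2)
      rwa [hg] at this⟩ : ↥C))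
    (by
      rw [Finite.surjective_iff_bijective.symm]
      rintro ⟨x, hx⟩
      obtain ⟨y, hy, hyx⟩ := per_surj (g := g) (by rw [hg]; exact hx)
      exact ⟨⟨y, by rwa [← hg]⟩, Subtype.ext hyx⟩)

@[simp] lemma permOn_coe (g : α → α) (C : Finset α) (hg : per g = C) (x : ↥C) :
    (permOn g C hg x : α) = g x := rfl

/-- The data outside the distinguished set. -/
def Rest (C : Finset α) : Type _ :=
  {h : α → α // (∀ x ∈ C, h x = x) ∧ ∀ x, h^[Fintype.card α] x ∈ C}

instance (C : Finset α) : Fintype (Rest C) := by unfold Rest; infer_instance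

/-- Stop a function on `C`. -/
def stopped (C : Finset α) (g : α → α) : α → α := fun x => if x ∈ C then x else g x

lemma stopped_mem_rest {C : Finset α} {g : α → α}
    (hg : ∀ x, ∃ k ≤ Fintype.card α, g^[k] x ∈ C) :
    (∀ x ∈ C, stopped C g x = x) ∧ ∀ x, (stopped C g)^[Fintype.card α] x ∈ C := by
  constructor
  · intro x hx; simp [stopped, hx]
  · intro x
    obtain ⟨k, hk, hkC⟩ := hg x
    obtain ⟨k', hk', hk'C⟩ := iter_enter (g := stopped C g) (h := g)
      (fun y hy => by simp [stopped, hy]) k x hkC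
    have := iter_stay (g := stopped C g) (C := C)
      (fun y hy => by simp [stopped, hy]) hk'C (Fintype.card α - k')
    have heq : Fintype.card α - k' + k' = Fintype.card α := by omega
    rwa [heq] at this

/-- Glue a permutation on `C` with a function outside `C`. -/
def glue (C : Finset α) (σ : Equiv.Perm ↥C) (h : α → α) : α → α :=
  fun x => if hx : x ∈ C then (σ ⟨x, hx⟩ : α) else h x

lemma glue_mem {C : Finset α} {σ : Equiv.Perm ↥C} {h : α → α} {x : α} (hx : x ∈ C) :
    glue C σ h x ∈ C := by
  simp only [glue, dif_pos hx]
  exact (σ ⟨x, hx⟩).2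

lemma glue_iterate {C : Finset α} {σ : Equiv.Perm ↥C} {h : α → α} (k : ℕ) (x : ↥C) :
    (glue C σ h)^[k] (x : α) = ((⇑σ)^[k] x : α) := by
  induction k generalizing x with
  | zero => simp
  | succ k ih =>
    rw [iterate_succ_apply, iterate_succ_apply]
    have : glue C σ h (x : α) = ((σ x : ↥C) : α) := by
      simp [glue, dif_pos x.2]
    rw [this, ih]

lemma per_glue {C : Finset α} {σ : Equiv.Perm ↥C} {h : α → α}
    (hfix : ∀ x ∈ C, h x = x) (hreach : ∀ x, h^[Fintype.card α] x ∈ C) :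
    per (glue C σ h) = C := by
  apply Finset.Subset.antisymm
  · intro x hx
    by_contra hxC
    rw [mem_per] at hx
    obtain ⟨k, h1, h2, h3⟩ := hx
    -- the glue-orbit of x enters C and stays there; periodicity puts x in C
    obtain ⟨k', hk', hk'C⟩ := iter_enter (g := glue C σ h) (h := h)
      (fun y hy => by simp [glue, dif_neg hy]) (Fintype.card α) x (hreach x)
    have hstay := iter_stay (g := glue C σ h) (C := C)
      (fun y hy => glue_mem hy) hk'C (k * k' + k - k')
    have heq : k * k' + k - k' + k' = k * (k' + 1) := by
      have h5 : k * k' + k = k * (k' + 1) := by ring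
      have h6 : k' ≤ k * k' := Nat.le_mul_of_pos_left k' (by omega)
      omega
    rw [heq] at hstay
    have hper : (glue C σ h)^[k * (k' + 1)] x = x := by
      rw [Function.iterate_mul]
      exact iterate_fixed h3 _
    rw [hper] at hstay
    exact hxC hstay
  · intro x hx
    rw [mem_per]
    obtain ⟨k, h1, h2, h3⟩ := exists_iterate_eq_self (f := ⇑σ) σ.injective ⟨x, hx⟩
    refine ⟨k, h1, le_trans h2 ?_, ?_⟩
    · simpa using Fintype.card_le_of_injective (fun x : ↥C => (x : α)) Subtype.val_injective
    · have := glue_iterate (σ := σ) (h := h) k ⟨x, hx⟩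
      rw [this, h3]

/-- Fiber of the periodic-set map. -/
def PerFiber (C : Finset α) : Type _ := {g : α → α // per g = C}

noncomputable def perFiberEquiv (C : Finset α) :
    PerFiber C ≃ Equiv.Perm ↥C × Rest C where
  toFun g := ⟨permOn g.1 C g.2, ⟨stopped C g.1,
    stopped_mem_rest (fun x => ⟨Fintype.card α, le_rfl, by
      have h := iterate_card_mem_per g.1 x; rwa [g.2] at h⟩)⟩⟩
  invFun p := ⟨glue C p.1 p.2.1, per_glue p.2.2.1 p.2.2.2⟩
  left_inv := by
    rintro ⟨g, hg⟩
    apply Subtype.ext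
    funext x
    by_cases hx : x ∈ C
    · simp [glue, dif_pos hx]
    · simp [glue, dif_neg hx, stopped, if_neg hx]
  right_inv := by
    rintro ⟨σ, h, hh⟩
    refine Prod.ext ?_ (Subtype.ext ?_)
    · apply Equiv.ext
      rintro ⟨x, hx⟩
      apply Subtype.ext
      simp [glue, dif_pos hx]
    · funext x
      by_cases hx : x ∈ C
      · simp only [stopped, if_pos hx]
        exact (hh.1 x hx).symm
      · simp [stopped, if_neg hx, glue, dif_neg hx]


/-! ### Rooted functions -/

/-- A function is rooted if all its orbits converge to a common fixed point. -/
def IsRooted (f : α → α) : Prop := ∃ r, ∀ x, f^[Fintype.card α] x = r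

instance (f : α → α) : Decidable (IsRooted f) := by unfold IsRooted; infer_instance

def pathFinset (f : α → α) (a : α) : Finset α :=
  image (fun i : Fin (Fintype.card α) => f^[(i : ℕ)] a) univ

variable {f : α → α} {r : α}

lemma rooted_fix (hf : ∀ x, f^[Fintype.card α] x = r) : f r = r := by
  have h1 : f^[Fintype.card α] (f r) = r := hf _
  rwa [← iterate_succ_apply, iterate_succ_apply', hf r] at h1

lemma rooted_ge (hf : ∀ x, f^[Fintype.card α] x = r) {k : ℕ} (hk : Fintype.card α ≤ k)
    (x : α) : f^[k] x = r :=
  iter_fixed_of_le (rooted_fix hf) (hf x) hk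

lemma path_repeat_eq_root (hf : ∀ x, f^[Fintype.card α] x = r) {a : α} {i j : ℕ}
    (hij : i < j) (h : f^[i] a = f^[j] a) : f^[i] a = r := by
  have hrep := iter_periodic_repeat hij h
  have h1 : 1 ≤ j - i := by omega
  have hbig : i + Fintype.card α * (j - i) ≥ Fintype.card α := by
    have := Nat.le_mul_of_pos_right (Fintype.card α) (show 0 < j - i by omega)
    omega
  rw [← hrep (Fintype.card α)]
  exact rooted_ge hf hbig a

lemma mem_pathFinset_of_lt {a : α} {i : ℕ} (hi : i < Fintype.card α) :
    f^[i] a ∈ pathFinset f a :=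
  mem_image.2 ⟨⟨i, hi⟩, mem_univ _, rfl⟩

lemma card_le_card_univ (C : Finset α) : C.card ≤ Fintype.card α :=
  le_trans (Finset.card_le_univ C) (le_of_eq (card_univ))

lemma root_mem_pathFinset (hf : ∀ x, f^[Fintype.card α] x = r) (a : α) :
    r ∈ pathFinset f a := by
  by_cases hinj : Function.Injective (fun i : Fin (Fintype.card α) => f^[(i : ℕ)] a)
  · have hcard : (pathFinset f a).card = Fintype.card α := by
      rw [pathFinset, Finset.card_image_of_injective _ hinj, card_univ, Fintype.card_fin]
    have : pathFinset f a = univ := Finset.eq_univ_of_card _ (by rw [hcard])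
    rw [this]; exact mem_univ r
  · rw [Function.not_injective_iff] at hinj
    obtain ⟨i, j, hij, hne⟩ := hinj
    have hi := i.isLt
    have hj := j.isLt
    rcases Nat.lt_trichotomy (i : ℕ) (j : ℕ) with hlt | heq | hlt
    · rw [← path_repeat_eq_root hf hlt hij]
      exact mem_pathFinset_of_lt hi
    · exact absurd (Fin.ext heq) hne
    · rw [← path_repeat_eq_root hf hlt hij.symm]
      exact mem_pathFinset_of_lt hj

lemma path_inj {a : α} {C : Finset α} (hf : ∀ x, f^[Fintype.card α] x = r)
    (hC : pathFinset f a = C) :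
    Function.Injective (fun i : Fin C.card => f^[(i : ℕ)] a) := by
  have hCn : C.card ≤ Fintype.card α := card_le_card_univ C
  have key : ∀ i j : ℕ, i < j → j < C.card → f^[i] a = f^[j] a → False := by
    intro i j hij hjC hcontr
    have hroot : f^[i] a = r := path_repeat_eq_root hf hij hcontr
    have hsub : C ⊆ (Finset.range (i + 1)).image (fun m => f^[m] a) := by
      intro c hc
      rw [← hC] at hc
      obtain ⟨m, _, hm⟩ := mem_image.1 hc
      by_cases hmi : (m : ℕ) ≤ i
      · exact mem_image.2 ⟨m, Finset.mem_range.2 (by omega), hm⟩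
      · have : f^[(m : ℕ)] a = r := iter_fixed_of_le (rooted_fix hf) hroot (by omega)
        refine mem_image.2 ⟨i, Finset.mem_range.2 (by omega), ?_⟩
        rw [hroot, ← this, hm]
    have hcard := le_trans (Finset.card_le_card hsub)
      (le_trans Finset.card_image_le (le_of_eq (Finset.card_range _)))
    omega
  intro i j hij
  by_contra hne
  have hi := i.isLt
  have hj := j.isLt
  rcases Nat.lt_trichotomy (i : ℕ) (j : ℕ) with hlt | heq | hlt
  · exact key i j hlt (by omega) hij
  · exact hne (Fin.ext heq)
  · exact key j i hlt (by omega) hij.symm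

/-- The path from the mark to the root, as an equivalence `Fin C.card ≃ C`. -/
noncomputable def rtE {a : α} {C : Finset α} (hf : ∀ x, f^[Fintype.card α] x = r)
    (hC : pathFinset f a = C) : Fin C.card ≃ ↥C :=
  Equiv.ofBijective (fun i => (⟨f^[(i : ℕ)] a, by
      have := mem_pathFinset_of_lt (f := f) (a := a)
        (lt_of_lt_of_le i.isLt (card_le_card_univ C))
      rwa [hC] at this⟩ : ↥C))
    ((Fintype.bijective_iff_injective_and_card _).2
      ⟨fun i j h => path_inj hf hC (congrArg Subtype.val h), by simp [Fintype.card_coe]⟩)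

@[simp] lemma rtE_coe {a : α} {C : Finset α} (hf : ∀ x, f^[Fintype.card α] x = r)
    (hC : pathFinset f a = C) (i : Fin C.card) : (rtE hf hC i : α) = f^[(i : ℕ)] a := rfl

lemma root_idx {a : α} {C : Finset α} (hf : ∀ x, f^[Fintype.card α] x = r)
    (hC : pathFinset f a = C) : f^[C.card - 1] a = r := by
  have hrC : r ∈ C := by rw [← hC]; exact root_mem_pathFinset hf a
  obtain ⟨i, hi⟩ := (rtE hf hC).surjective ⟨r, hrC⟩
  have : f^[(i : ℕ)] a = r := congrArg Subtype.val hi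
  have hile : (i : ℕ) ≤ C.card - 1 := by have := i.isLt; omega
  exact iter_fixed_of_le (rooted_fix hf) this hile

/-! ### The chain function built from an arrangement -/

section Chain

variable {C : Finset α} (e : Fin C.card ≃ ↥C) (h : α → α) (hm : 0 < C.card)

/-- The function on `α` which walks along the arrangement `e` on `C` and follows `h`
outside of `C`. -/
noncomputable def chainFun : α → α := fun x =>
  if hx : x ∈ C then
    (e ⟨min ((e.symm ⟨x, hx⟩ : ℕ) + 1) (C.card - 1), by omega⟩ : α)
  else h x

lemma chainFun_iterate (k : ℕ) (x : α) (hx : x ∈ C) :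
    (chainFun e h hm)^[k] x
      = (e ⟨min ((e.symm ⟨x, hx⟩ : ℕ) + k) (C.card - 1), by omega⟩ : α) := by
  induction k generalizing x with
  | zero =>
    have hlt : ((e.symm ⟨x, hx⟩ : Fin C.card) : ℕ) < C.card := (e.symm ⟨x, hx⟩).isLt
    have : (⟨min ((e.symm ⟨x, hx⟩ : ℕ) + 0) (C.card - 1), by omega⟩ : Fin C.card)
        = e.symm ⟨x, hx⟩ := by
      apply Fin.ext
      simp only []
      omega
    rw [iterate_zero_apply, this, Equiv.apply_symm_apply]
  | succ k ih =>
    rw [iterate_succ_apply]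
    have hfx : chainFun e h hm x
        = (e ⟨min ((e.symm ⟨x, hx⟩ : ℕ) + 1) (C.card - 1), by omega⟩ : α) := by
      simp [chainFun, dif_pos hx]
    have hfxC : chainFun e h hm x ∈ C := by rw [hfx]; exact (e _).2
    rw [ih _ hfxC]
    have hsub : (⟨chainFun e h hm x, hfxC⟩ : ↥C)
        = e ⟨min ((e.symm ⟨x, hx⟩ : ℕ) + 1) (C.card - 1), by omega⟩ := by
      apply Subtype.ext
      exact hfx
    simp only [hsub, Equiv.symm_apply_apply]
    congr 1
    apply congrArg
    apply Fin.ext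
    simp only [Fin.val_mk]
    omega

/-- the root of the chain function -/
noncomputable def chainRoot : α := (e ⟨C.card - 1, by omega⟩ : α)

lemma chainRoot_mem : chainRoot e hm ∈ C := (e _).2

lemma chainFun_mem {x : α} (hx : x ∈ C) : chainFun e h hm x ∈ C := by
  simp only [chainFun, dif_pos hx]
  exact (e _).2

lemma esymm_coe {C : Finset α} (e : Fin C.card ≃ ↥C) (i : Fin C.card)
    (hmem : (e i : α) ∈ C) : e.symm ⟨(e i : α), hmem⟩ = i := by
  have h1 : (⟨(e i : α), hmem⟩ : ↥C) = e i := Subtype.ext rfl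
  rw [h1, Equiv.symm_apply_apply]

lemma chainFun_fix : chainFun e h hm (chainRoot e hm) = chainRoot e hm := by
  have hmem : ((e ⟨C.card - 1, by omega⟩ : ↥C) : α) ∈ C := (e _).2
  rw [chainFun, dif_pos (chainRoot_mem e hm)]
  simp only [chainRoot]
  have hidx : ((e.symm ⟨((e ⟨C.card - 1, by omega⟩ : ↥C) : α), hmem⟩ : Fin C.card) : ℕ)
      = C.card - 1 := by rw [esymm_coe e _ hmem]
  congr 1
  apply congrArg
  apply Fin.ext
  simp only [Fin.val_mk]
  omega

lemma chainFun_iterate_card (x : α) (hx : x ∈ C) :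
    (chainFun e h hm)^[Fintype.card α] x = chainRoot e hm := by
  rw [chainFun_iterate e h hm _ x hx, chainRoot]
  congr 2
  apply Fin.ext
  simp only [Fin.val_mk]
  have h1 : ((e.symm ⟨x, hx⟩ : Fin C.card) : ℕ) + Fintype.card α ≥ C.card :=
    le_trans (card_le_card_univ C) (by omega)
  omega

lemma chainFun_rooted (hh : ∀ y, h^[Fintype.card α] y ∈ C) :
    ∀ x, (chainFun e h hm)^[Fintype.card α] x = chainRoot e hm := by
  intro x
  by_cases hx : x ∈ C
  · exact chainFun_iterate_card e h hm x hx
  · obtain ⟨k, hk, hkC⟩ := iter_enter (g := chainFun e h hm) (h := h)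
      (fun y hy => by simp [chainFun, dif_neg hy]) (Fintype.card α) x (hh x)
    have hreach : (chainFun e h hm)^[Fintype.card α + k] x = chainRoot e hm := by
      rw [iterate_add_apply]
      exact chainFun_iterate_card e h hm _ hkC
    exact iter_card_eq_fixed (chainFun_fix e h hm) ⟨Fintype.card α + k, hreach⟩

lemma chainFun_pathFinset :
    pathFinset (chainFun e h hm) ((e ⟨0, hm⟩ : α)) = C := by
  have haC : ((e ⟨0, hm⟩ : α)) ∈ C := (e _).2
  have hidx : e.symm ⟨(e ⟨0, hm⟩ : α), haC⟩ = ⟨0, hm⟩ := by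
    rw [show (⟨(e ⟨0, hm⟩ : α), haC⟩ : ↥C) = e ⟨0, hm⟩ from Subtype.ext rfl,
      Equiv.symm_apply_apply]
  apply Finset.Subset.antisymm
  · intro c hc
    obtain ⟨i, _, hi⟩ := mem_image.1 hc
    rw [chainFun_iterate e h hm _ _ haC] at hi
    rw [← hi]
    exact (e _).2
  · intro c hc
    have hlt : ((e.symm ⟨c, hc⟩ : Fin C.card) : ℕ) < C.card := (e.symm ⟨c, hc⟩).isLt
    have hltn : ((e.symm ⟨c, hc⟩ : Fin C.card) : ℕ) < Fintype.card α :=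
      lt_of_lt_of_le hlt (card_le_card_univ C)
    refine mem_image.2 ⟨⟨(e.symm ⟨c, hc⟩ : ℕ), hltn⟩, mem_univ _, ?_⟩
    rw [chainFun_iterate e h hm _ _ haC]
    have : (⟨min ((e.symm ⟨(e ⟨0, hm⟩ : α), haC⟩ : ℕ) + (e.symm ⟨c, hc⟩ : ℕ))
        (C.card - 1), by omega⟩ : Fin C.card) = e.symm ⟨c, hc⟩ := by
      apply Fin.ext
      simp only [Fin.val_mk, hidx]
      omega
    rw [this, Equiv.apply_symm_apply]

end Chain


/-! ### The fiber equivalence on the rooted side -/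

def RTFiber (C : Finset α) : Type _ :=
  {p : {p : (α → α) × α // IsRooted p.1} // pathFinset p.1.1 p.1.2 = C}

noncomputable def rtFiberEquiv (C : Finset α) [Nonempty α] :
    RTFiber C ≃ (Fin C.card ≃ ↥C) × Rest C where
  toFun p :=
    ⟨rtE p.1.2.choose_spec p.2, ⟨stopped C p.1.1.1,
      stopped_mem_rest (fun x => ⟨Fintype.card α, le_rfl, by
        have h1 := root_mem_pathFinset p.1.2.choose_spec p.1.1.2
        rw [p.2] at h1
        rw [p.1.2.choose_spec x]
        exact h1⟩)⟩⟩
  invFun q :=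
    have hm : 0 < C.card := Finset.card_pos.2
      ⟨q.2.1^[Fintype.card α] (Classical.arbitrary α), q.2.2.2 _⟩
    ⟨⟨⟨chainFun q.1 q.2.1 hm, (q.1 ⟨0, hm⟩ : α)⟩,
      ⟨chainRoot q.1 hm, chainFun_rooted q.1 q.2.1 hm q.2.2.2⟩⟩,
      chainFun_pathFinset q.1 q.2.1 hm⟩
  left_inv := by
    rintro ⟨⟨⟨f, a⟩, hroot⟩, hpath⟩
    have hf := hroot.choose_spec
    set r := hroot.choose with hr
    apply Subtype.ext
    apply Subtype.ext
    have hm : 0 < C.card := by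
      have : a ∈ pathFinset f a := by
        have := mem_pathFinset_of_lt (f := f) (a := a) (Fintype.card_pos (α := α))
        simpa using this
      rw [hpath] at this
      exact Finset.card_pos.2 ⟨a, this⟩
    apply Prod.ext
    · -- the function component
      funext x
      by_cases hx : x ∈ C
      · simp only [chainFun, dif_pos hx]
        set e := rtE hf hpath with he
        set idx := (e.symm ⟨x, hx⟩ : Fin C.card) with hidx
        have hxval : f^[(idx : ℕ)] a = x :=
          congrArg Subtype.val (e.apply_symm_apply ⟨x, hx⟩)
        have hcoe : ∀ (j : Fin C.card), ((e j : ↥C) : α) = f^[(j : ℕ)] a := by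
          intro j; rfl
        rw [hcoe]
        change f^[min ((idx : ℕ) + 1) (C.card - 1)] a = f x
        by_cases hcase : (idx : ℕ) + 1 ≤ C.card - 1
        · have : min ((idx : ℕ) + 1) (C.card - 1) = (idx : ℕ) + 1 := by omega
          simp only [this]
          rw [← hxval]
          exact iterate_succ_apply' f _ a
        · have hidxeq : (idx : ℕ) = C.card - 1 := by
            have := idx.isLt; omega
          have hmin : min ((idx : ℕ) + 1) (C.card - 1) = (idx : ℕ) := by omega
          simp only [hmin]
          rw [hxval]
          -- x = f^[C.card - 1] a = r, so f x = x
          have hxr : x = r := by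
            rw [← hxval, hidxeq]
            exact root_idx hf hpath
          have hfr : f r = r := rooted_fix hf
          rw [hxr, hfr]
      · simp only [chainFun, dif_neg hx, stopped, if_neg hx]
    · -- the mark component
      rfl
  right_inv := by
    rintro ⟨e, h, hh⟩
    have hm : 0 < C.card := Finset.card_pos.2
      ⟨h^[Fintype.card α] (Classical.arbitrary α), hh.2 _⟩
    refine Prod.ext ?_ (Subtype.ext ?_)
    · apply Equiv.ext
      intro i
      apply Subtype.ext
      show (chainFun e h hm)^[(i : ℕ)] ((e ⟨0, hm⟩ : α)) = (e i : α)
      rw [chainFun_iterate e h hm _ _ (e ⟨0, hm⟩).2]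
      have hidx0 : ((e.symm ⟨((e ⟨0, hm⟩ : ↥C) : α), (e ⟨0, hm⟩).2⟩ : Fin C.card) : ℕ) = 0 := by
        rw [esymm_coe e _ (e ⟨0, hm⟩).2]
      congr 1
      apply congrArg
      apply Fin.ext
      simp only [Fin.val_mk]
      have := i.isLt
      omega
    · funext x
      by_cases hx : x ∈ C
      · simp only [stopped, if_pos hx]
        exact (hh.1 x hx).symm
      · simp only [stopped, if_neg hx, chainFun, dif_neg hx]


/-! ### Counting -/

lemma nat_card_eq_sum_fibers {β γ : Type*} [Fintype β] [Fintype γ] (φ : β → γ) :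
    Nat.card β = ∑ c : γ, Nat.card {b // φ b = c} := by
  classical
  rw [Nat.card_congr (Equiv.sigmaFiberEquiv φ).symm, Nat.card_eq_fintype_card,
    Fintype.card_sigma]
  exact Finset.sum_congr rfl (fun c _ => (Nat.card_eq_fintype_card).symm)

lemma card_fiber_eq (C : Finset α) [Nonempty α] :
    Nat.card (RTFiber (α := α) C) = Nat.card (PerFiber (α := α) C) := by
  rw [Nat.card_congr (rtFiberEquiv C), Nat.card_congr (perFiberEquiv C),
    Nat.card_prod, Nat.card_prod]
  congr 1
  have e0 : Fin C.card ≃ ↥C := (Fintype.equivFinOfCardEq (Fintype.card_coe C)).symm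
  rw [Nat.card_eq_fintype_card, Nat.card_eq_fintype_card, Fintype.card_equiv e0,
    Fintype.card_perm, Fintype.card_coe, Fintype.card_fin]

lemma card_funs_eq_card_rtp [Nonempty α] :
    Nat.card (α → α) = Nat.card {p : (α → α) × α // IsRooted p.1} := by
  rw [nat_card_eq_sum_fibers (per (α := α)),
    nat_card_eq_sum_fibers (fun p : {p : (α → α) × α // IsRooted p.1} =>
      pathFinset p.1.1 p.1.2)]
  refine Finset.sum_congr rfl (fun C _ => ?_)
  exact (card_fiber_eq C).symm

def rtpEquiv : {p : (α → α) × α // IsRooted p.1} ≃ {f : α → α // IsRooted f} × α where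
  toFun p := (⟨p.1.1, p.2⟩, p.1.2)
  invFun q := ⟨⟨q.1.1, q.2⟩, q.1.2⟩
  left_inv := by rintro ⟨⟨f, a⟩, h⟩; rfl
  right_inv := by rintro ⟨⟨f, h⟩, a⟩; rfl

noncomputable def rootMap [Nonempty α] (p : {f : α → α // IsRooted f}) : α :=
  p.1^[Fintype.card α] (Classical.arbitrary α)

noncomputable def rootFiberEquiv [Nonempty α] (r : α) :
    {p : {f : α → α // IsRooted f} // rootMap p = r}
      ≃ {f : α → α // ∀ x, f^[Fintype.card α] x = r} where
  toFun p := ⟨p.1.1, fun x => by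
    have h1 := p.1.2.choose_spec x
    have h2 := p.1.2.choose_spec (Classical.arbitrary α)
    have h3 : rootMap p.1 = r := p.2
    rw [rootMap] at h3
    rw [h1, ← h2, h3]⟩
  invFun f := ⟨⟨f.1, ⟨r, f.2⟩⟩, f.2 _⟩
  left_inv := by rintro ⟨⟨f, h⟩, h2⟩; rfl
  right_inv := by rintro ⟨f, h⟩; rfl

lemma card_rooted [Nonempty α] :
    Nat.card {f : α → α // IsRooted f}
      = ∑ r : α, Nat.card {f : α → α // ∀ x, f^[Fintype.card α] x = r} := by
  rw [nat_card_eq_sum_fibers (rootMap (α := α))]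
  exact Finset.sum_congr rfl (fun r _ => Nat.card_congr (rootFiberEquiv r))

/-- Joyal's counting: `n^n = n * (number of rooted functions at each root summed)`. -/
lemma joyal [Nonempty α] :
    Fintype.card α ^ Fintype.card α
      = (∑ r : α, Nat.card {f : α → α // ∀ x, f^[Fintype.card α] x = r})
          * Fintype.card α := by
  have h1 : Nat.card (α → α) = Fintype.card α ^ Fintype.card α := by
    rw [Nat.card_eq_fintype_card, Fintype.card_fun]
  rw [← h1, card_funs_eq_card_rtp, Nat.card_congr (rtpEquiv (α := α)),
    Nat.card_prod, card_rooted, Nat.card_eq_fintype_card]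


/-! ### Trees and parent functions -/

open SimpleGraph

section Graph

/-- The parent function of a tree, directed towards the root `r`. -/
noncomputable def parentFun (G : SimpleGraph α) (hG : G.IsTree) (r : α) : α → α :=
  fun x =>
    if hx : x = r then r
    else (((hG.isConnected.preconnected x r).some.toPath : G.Walk x r)).getVert 1

lemma tree_walk_eq {G : SimpleGraph α} (hG : G.IsTree) {x y : α} {p q : G.Walk x y}
    (hp : p.IsPath) (hq : q.IsPath) : p = q :=
  congrArg Subtype.val (hG.IsAcyclic.path_unique ⟨p, hp⟩ ⟨q, hq⟩)

lemma parentFun_root (G : SimpleGraph α) (hG : G.IsTree) (r : α) :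
    parentFun G hG r r = r := by
  rw [parentFun]
  exact dif_pos rfl

lemma parentFun_spec (G : SimpleGraph α) (hG : G.IsTree) (r : α) {x : α} (hx : x ≠ r)
    (p : G.Walk x r) (hp : p.IsPath) : parentFun G hG r x = p.getVert 1 := by
  rw [parentFun, dif_neg hx]
  congr 1
  exact tree_walk_eq hG (Walk.toPath _).2 hp

lemma parentFun_adj (G : SimpleGraph α) (hG : G.IsTree) (r : α) {x : α} (hx : x ≠ r) :
    G.Adj x (parentFun G hG r x) := by
  rw [parentFun, dif_neg hx]
  set p : G.Walk x r := ((hG.isConnected.preconnected x r).some.toPath : G.Walk x r) with hp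
  have hlen : 0 < p.length := by
    rcases Nat.eq_zero_or_pos p.length with h0 | h; swap
    · exact h
    · exact absurd (Walk.eq_of_length_eq_zero h0) hx
  have := p.adj_getVert_succ hlen
  rwa [Walk.getVert_zero] at this

lemma parentFun_rooted (G : SimpleGraph α) (hG : G.IsTree) (r : α) :
    ∀ x, (parentFun G hG r)^[Fintype.card α] x = r := by
  have claim : ∀ (L : ℕ) (x : α) (p : G.Walk x r), p.IsPath → p.length ≤ L →
      (parentFun G hG r)^[L] x = r := by
    intro L
    induction L with
    | zero =>
      intro x p hp hlen
      have := Walk.eq_of_length_eq_zero (Nat.le_zero.1 hlen)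
      simpa using this
    | succ L ih =>
      intro x p hp hlen
      by_cases hx : x = r
      · subst hx
        exact iterate_fixed (parentFun_root G hG x) _
      · cases p with
        | nil => exact absurd rfl hx
        | @cons _ y _ hadj q =>
          have hq : q.IsPath := hp.of_cons
          have hy : parentFun G hG r x = y := by
            rw [parentFun_spec G hG r hx _ hp]
            simp [Walk.getVert_cons_succ, Walk.getVert_zero]
          rw [iterate_succ_apply, hy]
          have hql : q.length ≤ L := by
            have h2 : q.length + 1 ≤ L + 1 := by
              simpa [Walk.length_cons] using hlen
            omega
          exact ih y q hq hql
  intro x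
  have hp := ((hG.isConnected.preconnected x r).some.toPath).2
  exact claim _ x _ hp (le_of_lt hp.length_lt)

/-- The graph associated to a function: edges `x ~ f x`. -/
def graphOfFun (f : α → α) : SimpleGraph α where
  Adj x y := x ≠ y ∧ (f x = y ∨ f y = x)
  symm := by
    constructor
    rintro x y ⟨h1, h2⟩
    exact ⟨h1.symm, h2.symm⟩
  loopless := ⟨fun x h => h.1 rfl⟩

variable {f : α → α} {r : α}

lemma rooted_periodic_eq (hf : ∀ x, f^[Fintype.card α] x = r) {x : α} {k : ℕ}
    (hk : f^[k + 1] x = x) : x = r := by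
  have h1 : f^[(k + 1) * Fintype.card α] x = x := by
    rw [iterate_mul]
    exact iterate_fixed hk _
  have h2 : (k + 1) * Fintype.card α ≥ Fintype.card α :=
    Nat.le_mul_of_pos_left _ (by omega)
  rw [← h1]
  exact rooted_ge hf h2 x

lemma rooted_adj (hf : ∀ x, f^[Fintype.card α] x = r) {x : α} (hx : x ≠ r) :
    (graphOfFun f).Adj x (f x) := by
  refine ⟨fun he => hx (rooted_periodic_eq hf (k := 0) (by simpa using he.symm)), Or.inl rfl⟩

lemma graphOfFun_reachable (hf : ∀ x, f^[Fintype.card α] x = r) (x : α) :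
    (graphOfFun f).Reachable x r := by
  have claim : ∀ (k : ℕ) (x : α), f^[k] x = r → (graphOfFun f).Reachable x r := by
    intro k
    induction k with
    | zero => intro x h; rw [iterate_zero_apply] at h; exact h ▸ Reachable.refl x
    | succ k ih =>
      intro x h
      by_cases hx : x = r
      · exact hx ▸ Reachable.refl x
      · exact ((rooted_adj hf hx).reachable).trans
          (ih (f x) (by rwa [← iterate_succ_apply]))
  exact claim _ x (hf x)

lemma graphOfFun_connected [Nonempty α] (hf : ∀ x, f^[Fintype.card α] x = r) :
    (graphOfFun f).Connected := by
  refine ⟨fun x y => ?_⟩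
  exact (graphOfFun_reachable hf x).trans (graphOfFun_reachable hf y).symm

/-- The canonical walk along the orbit of `f` from `x` to the root. -/
def orbitWalk (hf : ∀ x, f^[Fintype.card α] x = r) :
    (k : ℕ) → (x : α) → f^[k] x = r → (graphOfFun f).Walk x r
  | 0, x, h => (Walk.nil' r).copy (show x = r by simpa using h).symm rfl
  | k + 1, x, h =>
    if hx : x = r then (Walk.nil' r).copy hx.symm rfl
    else Walk.cons (rooted_adj hf hx)
      (orbitWalk hf k (f x) (by rw [← iterate_succ_apply]; exact h))

lemma orbitWalk_self (hf : ∀ x, f^[Fintype.card α] x = r) (k : ℕ)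
    (h : f^[k] r = r) : orbitWalk hf k r h = Walk.nil' r := by
  cases k with
  | zero => rw [orbitWalk]; exact Walk.copy_rfl_rfl _
  | succ k => rw [orbitWalk, dif_pos rfl]; exact Walk.copy_rfl_rfl _

lemma orbitWalk_support (hf : ∀ x, f^[Fintype.card α] x = r) :
    ∀ (k : ℕ) (x : α) (h : f^[k] x = r) (z : α),
      z ∈ (orbitWalk hf k x h).support → ∃ j ≤ k, f^[j] x = z := by
  intro k
  induction k with
  | zero =>
    intro x h z hz
    rw [orbitWalk, Walk.support_copy] at hz
    simp only [Walk.support_nil, List.mem_singleton] at hz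
    exact ⟨0, le_refl _, by simpa [hz] using h⟩
  | succ k ih =>
    intro x h z hz
    rw [orbitWalk] at hz
    by_cases hx : x = r
    · rw [dif_pos hx, Walk.support_copy] at hz
      simp only [Walk.support_nil, List.mem_singleton] at hz
      exact ⟨0, by omega, by rw [iterate_zero_apply, hx, hz]⟩
    · rw [dif_neg hx, Walk.support_cons] at hz
      rcases List.mem_cons.1 hz with hz | hz
      · exact ⟨0, by omega, by rw [iterate_zero_apply, hz]⟩
      · obtain ⟨j, hj, hjz⟩ := ih (f x) _ z hz
        exact ⟨j + 1, by omega, by rwa [iterate_succ_apply]⟩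

lemma orbitWalk_snd_mem (hf : ∀ x, f^[Fintype.card α] x = r) (k : ℕ) (x : α)
    (h : f^[k] x = r) (hx : x ≠ r) : f x ∈ (orbitWalk hf k x h).support := by
  cases k with
  | zero => exact absurd (by simpa using h) hx
  | succ k =>
    rw [orbitWalk, dif_neg hx, Walk.support_cons]
    exact List.mem_cons.2 (Or.inr (Walk.start_mem_support _))

lemma orbitWalk_getVert_one (hf : ∀ x, f^[Fintype.card α] x = r) (k : ℕ) (x : α)
    (h : f^[k] x = r) (hx : x ≠ r) : (orbitWalk hf k x h).getVert 1 = f x := by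
  cases k with
  | zero => exact absurd (by simpa using h) hx
  | succ k =>
    rw [orbitWalk, dif_neg hx]
    simp [Walk.getVert_cons_succ, Walk.getVert_zero]

lemma orbitWalk_first_edge (hf : ∀ x, f^[Fintype.card α] x = r) (k : ℕ) (x : α)
    (h : f^[k] x = r) (hx : x ≠ r) : s(x, f x) ∈ (orbitWalk hf k x h).edges := by
  cases k with
  | zero => exact absurd (by simpa using h) hx
  | succ k =>
    rw [orbitWalk, dif_neg hx]
    simp [Walk.edges_cons]

/-- Any path from `x` to the root equals the orbit walk. -/
lemma path_eq_orbitWalk [Nonempty α] {x r : α} (p : (graphOfFun f).Walk x r) :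
    ∀ (hf : ∀ y, f^[Fintype.card α] y = r), p.IsPath →
      ∀ (k : ℕ) (h : f^[k] x = r), p = orbitWalk hf k x h := by
  induction p with
  | nil =>
    intro hf hp k h
    exact (orbitWalk_self hf k h).symm
  | @cons u y z hadj q ih =>
    intro hf hp k h
    have hu : u ≠ z := by
      intro hur
      rw [Walk.cons_isPath_iff] at hp
      exact hp.2 (hur ▸ Walk.end_mem_support q)
    cases k with
    | zero => exact absurd (by simpa using h) hu
    | succ k =>
      rw [orbitWalk, dif_neg hu]
      rcases hadj.2 with hxy | hyx
      · -- f u = y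
        subst hxy
        have hq : q = orbitWalk hf k (f u) (by rw [← iterate_succ_apply]; exact h) :=
          ih hf hp.of_cons k _
        rw [← hq]
      · -- f y = u : contradiction, u would be in the support of q
        exfalso
        have hy : y ≠ z := by
          intro hyr
          subst hyr
          exact hu (by rw [← hyx, rooted_fix hf])
        have hq : q = orbitWalk hf (Fintype.card α) y (hf y) := ih hf hp.of_cons _ _
        have hmem : u ∈ q.support := by
          rw [hq, ← hyx]
          exact orbitWalk_snd_mem hf _ y (hf y) hy
        rw [Walk.cons_isPath_iff] at hp
        exact hp.2 hmem

lemma graphOfFun_isTree [Nonempty α] (hf : ∀ x, f^[Fintype.card α] x = r) :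
    (graphOfFun f).IsTree := by
  constructor
  · exact graphOfFun_connected hf
  · rw [isAcyclic_iff_forall_adj_isBridge]
    have key : ∀ x : α, x ≠ r → (graphOfFun f).IsBridge s(x, f x) := by
      intro x hx
      rw [isBridge_iff_adj_and_forall_walk_mem_edges]
      refine fun p => ?_
      by_contra hne
      set q : (graphOfFun f).Walk x (f x) := (p.toPath : (graphOfFun f).Walk x (f x))
        with hqdef
      have hqe : s(x, f x) ∉ q.edges := fun hmem => hne (Walk.edges_toPath_subset p hmem)
      set w : (graphOfFun f).Walk x r :=
        q.append (orbitWalk hf (Fintype.card α) (f x) (hf (f x))) with hwdef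
      have hwp : (w.toPath : (graphOfFun f).Walk x r)
          = orbitWalk hf (Fintype.card α) x (hf x) :=
        path_eq_orbitWalk _ hf (w.toPath).2 _ _
      have hedge : s(x, f x) ∈ (w.toPath : (graphOfFun f).Walk x r).edges := by
        rw [hwp]
        exact orbitWalk_first_edge hf _ x (hf x) hx
      have hsub := Walk.edges_toPath_subset w hedge
      rw [hwdef, Walk.edges_append, List.mem_append] at hsub
      rcases hsub with hsub | hsub
      · exact hqe hsub
      · have hxs : x ∈ (orbitWalk hf (Fintype.card α) (f x) (hf (f x))).support :=
          Walk.fst_mem_support_of_mem_edges _ hsub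
        obtain ⟨j, hj, hjx⟩ := orbitWalk_support hf _ (f x) (hf (f x)) x hxs
        have : f^[j + 1] x = x := by rwa [iterate_succ_apply]
        exact hx (rooted_periodic_eq hf this)
    intro v w hadj
    rcases hadj.2 with hvw | hwv
    · have hv : v ≠ r := by
        intro hvr; subst hvr
        exact hadj.1 (by rw [← hvw, rooted_fix hf])
      exact hvw ▸ key v hv
    · have hw : w ≠ r := by
        intro hwr; subst hwr
        exact hadj.1 ((by rw [← hwv, rooted_fix hf]) : w = v).symm
      have := key w hw
      rwa [hwv, Sym2.eq_swap] at this

/-- A connected subgraph of an acyclic graph on the same vertex set is the whole graph. -/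
lemma tree_le_eq {G₁ G₂ : SimpleGraph α} (hle : G₁ ≤ G₂) (h1 : G₁.Connected)
    (h2 : G₂.IsAcyclic) : G₁ = G₂ := by
  apply le_antisymm hle
  intro x y hadj
  have hbridge := (isAcyclic_iff_forall_adj_isBridge.1 h2) hadj
  rw [isBridge_iff_adj_and_forall_walk_mem_edges] at hbridge
  obtain ⟨p⟩ := h1.preconnected x y
  have hsub : ∀ e ∈ p.edges, e ∈ G₂.edgeSet := by
    intro e he
    exact (SimpleGraph.edgeSet_mono hle) (Walk.edges_subset_edgeSet p he)
  have hmem := hbridge (p.transfer G₂ hsub)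
  rw [Walk.edges_transfer] at hmem
  have := Walk.edges_subset_edgeSet p hmem
  rwa [mem_edgeSet] at this

lemma graphOfFun_parentFun (G : SimpleGraph α) (hG : G.IsTree) (r : α) [Nonempty α] :
    graphOfFun (parentFun G hG r) = G := by
  have hf := parentFun_rooted G hG r
  apply tree_le_eq _ (graphOfFun_connected hf) hG.IsAcyclic
  intro x y hadj
  rcases hadj.2 with hxy | hyx
  · have hx : x ≠ r := by
      intro hxr; subst hxr
      exact hadj.1 (by rw [← hxy, parentFun_root])
    exact hxy ▸ parentFun_adj G hG r hx
  · have hy : y ≠ r := by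
      intro hyr; subst hyr
      exact hadj.1 ((by rw [← hyx, parentFun_root] : y = x)).symm
    exact (hyx ▸ parentFun_adj G hG r hy).symm

lemma parentFun_graphOfFun [Nonempty α] (hf : ∀ x, f^[Fintype.card α] x = r) :
    parentFun (graphOfFun f) (graphOfFun_isTree hf) r = f := by
  funext x
  by_cases hx : x = r
  · subst hx
    rw [parentFun_root, rooted_fix hf]
  · set p : (graphOfFun f).Walk x r :=
      (((graphOfFun_isTree hf).isConnected.preconnected x r).some.toPath :
        (graphOfFun f).Walk x r) with hpdef
    have hporbit : p = orbitWalk hf (Fintype.card α) x (hf x) :=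
      path_eq_orbitWalk p hf (Walk.toPath _).2 _ _
    rw [parentFun, dif_neg hx, ← hpdef, hporbit]
    exact orbitWalk_getVert_one hf _ x (hf x) hx

/-- The equivalence between trees and functions rooted at `r`. -/
noncomputable def treeEquiv [Nonempty α] (r : α) :
    {G : SimpleGraph α // G.IsTree} ≃ {f : α → α // ∀ x, f^[Fintype.card α] x = r} where
  toFun G := ⟨parentFun G.1 G.2 r, parentFun_rooted G.1 G.2 r⟩
  invFun f := ⟨graphOfFun f.1, graphOfFun_isTree f.2⟩
  left_inv G := Subtype.ext (graphOfFun_parentFun G.1 G.2 r)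
  right_inv f := Subtype.ext (parentFun_graphOfFun f.2)

end Graph

end Cayley

/-- Cayley's formula: the number of labelled (unrooted) trees on vertex set
`{1,…,n}` (modelled as `Fin n`) is `n ^ (n-2)`. -/
theorem stmt1 (n : ℕ) (hn : 1 ≤ n) :
    Nat.card {G : SimpleGraph (Fin n) // G.IsTree} = n ^ (n - 2) := by
  haveI hne : Nonempty (Fin n) := ⟨⟨0, hn⟩⟩
  set N := Nat.card {G : SimpleGraph (Fin n) // G.IsTree} with hN
  have htree : ∀ r : Fin n,
      Nat.card {f : Fin n → Fin n // ∀ x, f^[Fintype.card (Fin n)] x = r} = N :=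
    fun r => (Nat.card_congr (Cayley.treeEquiv r)).symm
  have hj := Cayley.joyal (α := Fin n)
  rw [Finset.sum_congr rfl (fun r _ => htree r), Finset.sum_const, Finset.card_univ,
    smul_eq_mul, Fintype.card_fin] at hj
  -- hj : n ^ n = n * N * n
  have hsq : N * n ^ 2 = n ^ n := by rw [hj]; ring
  have hkey : n ^ (n - 2) * n ^ 2 = n ^ n := by
    rcases Nat.lt_or_ge n 2 with h | h
    · interval_cases n
      · norm_num
    · rw [← pow_add]
      congr 1
      omega
  have hpos : 0 < n ^ 2 := by positivity
  exact Nat.eq_of_mul_eq_mul_right hpos (hsq.trans hkey.symm)
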